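/- arXiv:math/0605156 — 5 statements merged into one kernel-verified Lean document; each statement's English description precedes it below -/
import Mathlib

section
/- For any commutative ring R with unit, any L ∈ ℕ, any tuple m = (m₀,…,m_L) ∈ R^{L+1}, any topological space X, and any n ≥ 1, the composition of generalized cubical boundary operators vanishes: ∂_{n-1} ∘ ∂_n = 0 on the free R-module K_n(X) generated by continuous maps T : Iⁿ → X, where ∂_n(T) = Σ_{j=1}^{n} (-1)^{j+1} Σ_{i=0}^{L} m_i · ⟨T⟩_{n,i,j} and ⟨T⟩_{n,i,j}(x₁,…,x_{n-1}) = T(x₁,…,x_{j-1}, i/L, x_j,…,x_{n-1}). -/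
open scoped BigOperators

noncomputable section

/-- The `n`-dimensional unit cube. -/
abbrev Cube (n : ℕ) : Type := Fin n → unitInterval

/-- The point `i/L` of the unit interval, for `i ∈ {0,…,L}`. -/
def vertexVal (L : ℕ) (i : Fin (L + 1)) : unitInterval :=
  ⟨(i : ℝ) / L, ⟨by positivity,
    div_le_one_of_le₀ (by exact_mod_cast Fin.is_le i) (Nat.cast_nonneg L)⟩⟩

/-- Insertion of the constant `c` at the `j`-th coordinate. -/
def faceMap {n : ℕ} (j : Fin (n + 1)) (c : unitInterval) : C(Cube n, Cube (n + 1)) :=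
  ⟨fun x => j.insertNth c x, (continuous_const : Continuous fun _ : Cube n => c).finInsertNth j continuous_id⟩

/-- The face `⟨T⟩_{n,·,j}` of a singular cube at value `c` in direction `j`. -/
def face {X : Type} [TopologicalSpace X] {n : ℕ} (T : C(Cube (n + 1), X)) (j : Fin (n + 1))
    (c : unitInterval) : C(Cube n, X) :=
  T.comp (faceMap j c)

/-- The module of cubical `n`-chains: the free `R`-module on the continuous maps `Iⁿ → X`. -/
abbrev Kmod (R : Type) [CommRing R] (X : Type) [TopologicalSpace X] (n : ℕ) : Type :=
  C(Cube n, X) →₀ R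

/-- The weighted boundary operator. -/
def bdry (R : Type) [CommRing R] {L : ℕ} (m : Fin (L + 1) → R) (X : Type) [TopologicalSpace X]
    (n : ℕ) : Kmod R X (n + 1) →ₗ[R] Kmod R X n :=
  Finsupp.lift (Kmod R X n) R C(Cube (n + 1), X) fun T =>
    ∑ j : Fin (n + 1), ∑ i : Fin (L + 1),
      ((-1 : R) ^ (j : ℕ) * m i) • Finsupp.single (face T j (vertexVal L i)) (1 : R)

lemma succAbove_comm {n : ℕ} (i j : Fin (n + 1)) (h : i ≤ j) (k : Fin n) :
    j.succ.succAbove (i.succAbove k) = i.castSucc.succAbove (j.succAbove k) := by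
  ext
  simp only [Fin.succAbove, Fin.lt_def, Fin.coe_castSucc, Fin.val_succ, Fin.le_def,
    apply_ite Fin.val] at *
  split_ifs <;> simp_all <;> omega

lemma insertNth_comm {n : ℕ} {α : Type*} (i j : Fin (n + 1)) (h : i ≤ j) (c c' : α)
    (x : Fin n → α) :
    (Fin.insertNth (α := fun _ => α) i.castSucc c (Fin.insertNth j c' x)) =
      Fin.insertNth (α := fun _ => α) j.succ c' (Fin.insertNth i c x) := by
  funext p
  by_cases hp : p = j.succ
  · subst hp
    rw [Fin.insertNth_apply_same]
    have hp : (j.succ : Fin (n + 2)) = i.castSucc.succAbove j := by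
      rw [Fin.succAbove_of_le_castSucc]
      exact Fin.castSucc_le_castSucc_iff.mpr h
    rw [hp, Fin.insertNth_apply_succAbove, Fin.insertNth_apply_same]
  · obtain ⟨q, rfl⟩ := Fin.exists_succAbove_eq hp
    rw [Fin.insertNth_apply_succAbove]
    by_cases hq : q = i
    · subst hq
      rw [Fin.insertNth_apply_same]
      have hp2 : j.succ.succAbove q = q.castSucc := by
        rw [Fin.succAbove_of_castSucc_lt]
        exact Fin.castSucc_lt_succ_iff.mpr h
      rw [hp2, Fin.insertNth_apply_same]
    · obtain ⟨r, rfl⟩ := Fin.exists_succAbove_eq hq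
      rw [Fin.insertNth_apply_succAbove, succAbove_comm i j h r,
        Fin.insertNth_apply_succAbove, Fin.insertNth_apply_succAbove]

lemma face_comm {X : Type} [TopologicalSpace X] {n : ℕ} (T : C(Cube (n + 2), X))
    (i j : Fin (n + 1)) (h : i ≤ j) (c c' : unitInterval) :
    face (face T i.castSucc c) j c' = face (face T j.succ c') i c := by
  ext x
  simp only [face, faceMap, ContinuousMap.comp_apply, ContinuousMap.coe_mk]
  rw [insertNth_comm i j h c c' x]

lemma cancel (R : Type) [CommRing R] (L : ℕ) (m : Fin (L + 1) → R)
    (X : Type) [TopologicalSpace X] (n : ℕ) (T : C(Cube (n + 2), X)) :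
    ∑ x : Fin (n + 2) × Fin (L + 1) × Fin (n + 1) × Fin (L + 1),
      (((-1 : R) ^ (x.1 : ℕ) * m x.2.1) * ((-1 : R) ^ (x.2.2.1 : ℕ) * m x.2.2.2)) •
        Finsupp.single (face (face T x.1 (vertexVal L x.2.1)) x.2.2.1 (vertexVal L x.2.2.2))
          (1 : R) = 0 := by
  refine Finset.sum_ninvolution
    (fun x => if h : (x.1 : ℕ) ≤ (x.2.2.1 : ℕ)
      then (x.2.2.1.succ, x.2.2.2, ⟨(x.1 : ℕ), by omega⟩, x.2.1)
      else (Fin.castSucc x.2.2.1, x.2.2.2, ⟨(x.1 : ℕ) - 1, by omega⟩, x.2.1))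
    ?_ ?_ (fun _ => Finset.mem_univ _) ?_
  · rintro ⟨j, i, k, i'⟩
    dsimp only
    by_cases h : (j : ℕ) ≤ (k : ℕ)
    · rw [dif_pos h]
      dsimp only
      obtain ⟨a, rfl⟩ : ∃ a : Fin (n + 1), j = Fin.castSucc a :=
        ⟨⟨(j : ℕ), by omega⟩, by ext; rfl⟩
      rw [face_comm T a k (by simp only [Fin.le_def, Fin.coe_castSucc] at h ⊢; exact h)]
      simp only [Fin.coe_castSucc, Fin.eta]
      rw [← add_smul]
      convert zero_smul R _
      simp only [Fin.val_succ, Fin.coe_castSucc, pow_succ]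
      ring
    · rw [dif_neg h]
      dsimp only
      obtain ⟨b, rfl⟩ : ∃ b : Fin (n + 1), j = Fin.succ b :=
        ⟨⟨(j : ℕ) - 1, by omega⟩, by ext; simp [Fin.val_succ]; omega⟩
      rw [← face_comm T k b (by simp only [Fin.le_def, Fin.val_succ, not_le] at h ⊢; omega)]
      simp only [Fin.val_succ, Nat.add_sub_cancel, Fin.eta]
      rw [← add_smul]
      convert zero_smul R _
      simp only [Fin.val_succ, Fin.coe_castSucc, pow_succ]
      ring
  · rintro ⟨j, i, k, i'⟩ _
    dsimp only
    by_cases h : (j : ℕ) ≤ (k : ℕ)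
    · rw [dif_pos h]
      intro hcon
      have := congrArg (fun p => (p.1 : ℕ)) hcon
      simp at this; omega
    · rw [dif_neg h]
      intro hcon
      have := congrArg (fun p => (p.1 : ℕ)) hcon
      simp at this; omega
  · rintro ⟨j, i, k, i'⟩
    dsimp only
    by_cases h : (j : ℕ) ≤ (k : ℕ)
    · rw [dif_pos h]
      rw [dif_neg (by simp [Fin.lt_def]; omega)]
      ext <;> simp <;> omega
    · rw [dif_neg h]
      rw [dif_pos (by simp [Fin.le_def]; omega)]
      ext <;> simp <;> omega

/-- For any commutative ring `R`, length `L`, weight `m ∈ R^{L+1}`,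
topological space `X` and any `n`, the composition of two consecutive generalized
cubical boundary operators vanishes: `∂ ∘ ∂ = 0` (this covers `∂_{n-1} ∘ ∂_n = 0`
for all `n ≥ 1`, the case `n = 1` being trivial since `K_{-1} = 0`). -/
theorem bdry_comp_bdry_eq_zero (R : Type) [CommRing R] (L : ℕ) (m : Fin (L + 1) → R)
    (X : Type) [TopologicalSpace X] (n : ℕ) :
    (bdry R m X n).comp (bdry R m X (n + 1)) = 0 := by
  have key : ∀ (ν : ℕ) (S : C(Cube (ν + 1), X)),
      bdry R m X ν (Finsupp.single S 1) = ∑ j : Fin (ν + 1), ∑ i : Fin (L + 1),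
        ((-1 : R) ^ (j : ℕ) * m i) • Finsupp.single (face S j (vertexVal L i)) (1 : R) := by
    intro ν S
    simp [bdry, Finsupp.sum_single_index]
  apply Finsupp.lhom_ext'
  intro T
  apply LinearMap.ext_ring
  simp only [LinearMap.comp_apply, Finsupp.lsingle_apply, LinearMap.zero_apply,
    LinearMap.zero_comp]
  rw [key (n + 1) T, map_sum]
  simp only [map_sum, map_smul]
  have : ∀ (j : Fin (n + 2)) (i : Fin (L + 1)),
      bdry R m X n (Finsupp.single (face T j (vertexVal L i)) 1)
        = ∑ k : Fin (n + 1), ∑ i' : Fin (L + 1),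
          ((-1 : R) ^ (k : ℕ) * m i') •
            Finsupp.single (face (face T j (vertexVal L i)) k (vertexVal L i')) (1 : R) :=
    fun j i => key n _
  simp only [this, Finset.smul_sum, smul_smul]
  rw [← cancel R L m X n T]
  rw [Fintype.sum_prod_type]
  congr 1
  funext j
  rw [Fintype.sum_prod_type]
  congr 1
  funext i
  rw [Fintype.sum_prod_type]
end
end

section
/- For the one-point space {p}, the generalized cubical homology modules of weight m with index σ = Σ_{i=0}^L m_i satisfy: H_n(p) ≅ {x ∈ R : σ·x = 0} if n is odd, and H_n(p) ≅ R/(σR) if n is even. In particular if σ = 0 then H_n(p) ≅ R for all n ≥ 0. -/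
open scoped BigOperators

noncomputable section

/-- Cycles: kernel of the boundary operator (everything in degree `0`). -/
def cyclesMod (R : Type) [CommRing R] {L : ℕ} (m : Fin (L + 1) → R) (X : Type)
    [TopologicalSpace X] : (n : ℕ) → Submodule R (Kmod R X n)
  | 0 => ⊤
  | (k + 1) => LinearMap.ker (bdry R m X k)

/-- Boundaries, viewed inside the module of cycles. -/
def boundariesIn (R : Type) [CommRing R] {L : ℕ} (m : Fin (L + 1) → R) (X : Type)
    [TopologicalSpace X] (n : ℕ) : Submodule R ↥(cyclesMod R m X n) :=
  (LinearMap.range (bdry R m X n)).comap (cyclesMod R m X n).subtype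

/-- `H_n(X) ≅ A` expressed via the first isomorphism theorem: there is a surjective
linear map from the cycles onto `A` whose kernel is exactly the boundaries. -/
def HomologyIso (R : Type) [CommRing R] {L : ℕ} (m : Fin (L + 1) → R) (X : Type)
    [TopologicalSpace X] (n : ℕ) (A : Type) [AddCommGroup A] [Module R A] : Prop :=
  ∃ φ : ↥(cyclesMod R m X n) →ₗ[R] A,
    Function.Surjective φ ∧ LinearMap.ker φ = boundariesIn R m X n

/- Auxiliary material for `homology_of_point`. -/

instance uniqueCubeMap (n : ℕ) : Unique C(Cube n, PUnit) :=
  ⟨⟨ContinuousMap.const _ PUnit.unit⟩, fun _ => ContinuousMap.ext fun _ => rfl⟩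

lemma bdry_point_apply (R : Type) [CommRing R] {L : ℕ} (m : Fin (L + 1) → R) (n : ℕ)
    (x : Kmod R PUnit (n + 1)) :
    bdry R m PUnit n x =
      Finsupp.single default ((if Even n then (∑ i, m i) else 0) * x default) := by
  conv_lhs => rw [Finsupp.unique_single x]
  rw [bdry, Finsupp.lift_apply, Finsupp.sum_single_index (by simp)]
  have hface : ∀ (j : Fin (n + 1)) (c : unitInterval),
      face (default : C(Cube (n+1), PUnit)) j c = (default : C(Cube n, PUnit)) :=
    fun _ _ => Subsingleton.elim _ _
  simp only [hface, Finsupp.smul_single, smul_eq_mul, mul_one,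
    ← Finsupp.single_finset_sum]
  congr 1
  have : ∀ j : Fin (n + 1), ∑ i : Fin (L+1), (-1:R)^(j:ℕ) * m i
      = (-1:R)^(j:ℕ) * ∑ i, m i := fun j => by rw [Finset.mul_sum]
  simp only [this, ← Finset.sum_mul]
  have hs : (∑ j : Fin (n+1), (-1:R)^(j:ℕ)) = if Even n then 1 else 0 := by
    rw [Fin.sum_univ_eq_sum_range, neg_one_geom_sum]
    by_cases h : Even n <;> simp [h, Nat.even_add_one]
  rw [hs]
  by_cases h : Even n <;> simp [h, mul_comm]

lemma mem_cycles_succ (R : Type) [CommRing R] {L : ℕ} (m : Fin (L + 1) → R) (k : ℕ)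
    (x : Kmod R PUnit (k + 1)) :
    x ∈ cyclesMod R m PUnit (k + 1) ↔
      (if Even k then (∑ i, m i) else 0) * x default = 0 := by
  show x ∈ LinearMap.ker _ ↔ _
  rw [LinearMap.mem_ker, bdry_point_apply, Finsupp.single_eq_zero]

lemma cycles_point_top (R : Type) [CommRing R] {L : ℕ} (m : Fin (L + 1) → R) (n : ℕ)
    (h : ∀ k, n = k + 1 → (if Even k then (∑ i, m i) else 0) = 0) :
    cyclesMod R m PUnit n = ⊤ := by
  cases n with
  | zero => rfl
  | succ k =>
    rw [eq_top_iff]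
    intro x _
    rw [mem_cycles_succ, h k rfl, zero_mul]

lemma boundaries_point_bot (R : Type) [CommRing R] {L : ℕ} (m : Fin (L + 1) → R) (n : ℕ)
    (h : (if Even n then (∑ i, m i) else 0) = 0) :
    boundariesIn R m PUnit n = ⊥ := by
  have hr : LinearMap.range (bdry R m PUnit n) = ⊥ :=
    LinearMap.range_eq_bot.mpr (LinearMap.ext fun x => by
      rw [bdry_point_apply, h, zero_mul]; simp)
  rw [boundariesIn, hr, Submodule.comap_bot, Submodule.ker_subtype]

lemma eval_eq_zero_iff (R : Type) [CommRing R] (n : ℕ) (x : Kmod R PUnit n) :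
    x default = 0 ↔ x = 0 := by
  constructor
  · intro h; rw [Finsupp.unique_single x, h, Finsupp.single_zero]
  · intro h; rw [h]; rfl
/-- For the one-point space, the generalized cubical homology modules of
weight `m` with index `σ = Σ mᵢ` are `{x : R | σ·x = 0}` in odd degrees and `R/(σR)` in
even degrees; in particular they are all `≅ R` when `σ = 0`. -/
theorem homology_of_point (R : Type) [CommRing R] (L : ℕ) (m : Fin (L + 1) → R) (n : ℕ) :
    (Odd n → HomologyIso R m PUnit n
        ↥(LinearMap.ker (LinearMap.lsmul R R (∑ i, m i)))) ∧
    (Even n → HomologyIso R m PUnit n (R ⧸ Ideal.span {∑ i, m i})) ∧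
    ((∑ i, m i) = 0 → HomologyIso R m PUnit n R) := by
  set σ : R := ∑ i, m i with hσdef
  set ev : ↥(cyclesMod R m PUnit n) →ₗ[R] R :=
    (Finsupp.lapply default).comp (cyclesMod R m PUnit n).subtype with hev
  have hev_apply : ∀ x : ↥(cyclesMod R m PUnit n), ev x = (x : Kmod R PUnit n) default :=
    fun x => rfl
  have hkerev : LinearMap.ker ev = ⊥ := by
    ext x
    simp only [LinearMap.mem_ker, hev_apply, Submodule.mem_bot]
    rw [eval_eq_zero_iff, ← Submodule.coe_eq_zero]
  refine ⟨?_, ?_, ?_⟩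
  · -- odd case
    intro hn
    cases n with
    | zero => exact absurd hn (by simp)
    | succ k =>
      have hek : Even k := Nat.not_odd_iff_even.mp (Nat.odd_add_one.mp hn)
      refine ⟨LinearMap.codRestrict _ ev ?_, ?_, ?_⟩
      · intro x
        rw [LinearMap.mem_ker, LinearMap.lsmul_apply, smul_eq_mul, hev_apply]
        have := (mem_cycles_succ R m k _).mp x.2
        simpa [hek] using this
      · rintro ⟨r, hr⟩
        rw [LinearMap.mem_ker, LinearMap.lsmul_apply, smul_eq_mul] at hr
        refine ⟨⟨Finsupp.single default r,
          (mem_cycles_succ R m k _).mpr (by simpa [hek] using hr)⟩, ?_⟩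
        apply Subtype.ext
        simp [hev_apply]
      · rw [LinearMap.ker_codRestrict, hkerev,
          boundaries_point_bot R m (k + 1) (by simp [Nat.even_add_one, hek])]
  · -- even case
    intro hn
    have htop : cyclesMod R m PUnit n = ⊤ := cycles_point_top R m n (fun k hk => by
      have : ¬ Even k := by
        subst hk; simpa [Nat.even_add_one] using hn
      simp [this])
    have hb : ∀ y : Kmod R PUnit (n + 1),
        bdry R m PUnit n y = Finsupp.single default (σ * y default) := fun y => by
      rw [bdry_point_apply]; simp [hn]; rfl
    refine ⟨((Ideal.span {σ}).mkQ).comp ev, ?_, ?_⟩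
    · intro y
      obtain ⟨r, rfl⟩ := Submodule.mkQ_surjective _ y
      exact ⟨⟨Finsupp.single default r, htop ▸ Submodule.mem_top⟩, by simp [hev_apply]⟩
    · ext x
      rw [LinearMap.mem_ker, LinearMap.comp_apply, Submodule.mkQ_apply,
        Submodule.Quotient.mk_eq_zero, Ideal.mem_span_singleton]
      simp only [boundariesIn, Submodule.mem_comap, LinearMap.mem_range,
        Submodule.coe_subtype]
      constructor
      · rintro ⟨r, hr⟩
        refine ⟨Finsupp.single default r, ?_⟩
        rw [hb]
        conv_rhs => rw [Finsupp.unique_single (x : Kmod R PUnit n)]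
        rw [Finsupp.single_eq_same]
        rw [hev_apply] at hr
        rw [← hr]
      · rintro ⟨y, hy⟩
        refine ⟨y default, ?_⟩
        rw [hb] at hy
        have := congrArg (fun f : Kmod R PUnit n => f default) hy
        simp only [Finsupp.single_eq_same] at this
        rw [hev_apply, ← this]
  · -- σ = 0 case
    intro h0
    have htop : cyclesMod R m PUnit n = ⊤ := cycles_point_top R m n (fun k hk => by
      split_ifs <;> simp [← hσdef, h0])
    refine ⟨ev, ?_, ?_⟩
    · intro r
      exact ⟨⟨Finsupp.single default r, htop ▸ Submodule.mem_top⟩, by simp [hev_apply]⟩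
    · rw [hkerev, boundaries_point_bot R m n (by split_ifs <;> simp [← hσdef, h0])]
end
end

section
/- Suppose Σ_{k=0}^L r_k·m_k = 1 in R, and define the chain homotopy Θ_n : K_n(X) → K_{n+1}(X × I) by Θ_n(T) = Σ_{k=0}^L r_k·(ξ_n(T) − ψ_{n,k}(T)), where ξ_n(T)(x₁,…,x_{n+1}) = (T(x₁,…,x_n), 0) and ψ_{n,k}(T)(x₁,…,x_{n+1}) = (T(x₁,…,x_n), χ_k(x_{n+1})). Then for all n ≥ 0 and all continuous T : Iⁿ → X: (∂_{n+1} ∘ Θ_n)(T) = (-1)^{n+2}·(e₀(T) − e₁(T)) + (Θ_{n-1} ∘ ∂_n)(T), where e_i(T) = e_i ∘ T and Θ_{-1} = 0. -/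
open scoped BigOperators

noncomputable section

/-- The piecewise-linear "jag" function `χ_k` of height `1` at `k/L`. -/
def chi (L k : ℕ) (x : ℝ) : ℝ :=
  if k = 0 then max (1 - L * x) 0
  else if k = L then max (L * x - L + 1) 0
  else if x ≤ (k : ℝ) / L then max (L * x - k + 1) 0 else max (1 - L * x + k) 0

theorem chi_continuous (L k : ℕ) (hk : k ≤ L) : Continuous (chi L k) := by
  unfold chi
  rcases eq_or_ne k 0 with h0 | h0
  · simp only [if_pos h0]
    fun_prop
  rcases eq_or_ne k L with hL | hL
  · simp only [if_neg h0, if_pos hL]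
    fun_prop
  · simp only [if_neg h0, if_neg hL]
    have hLpos : 0 < L := by omega
    have hL0 : (L : ℝ) ≠ 0 := by exact_mod_cast hLpos.ne'
    apply Continuous.if_le (by fun_prop) (by fun_prop) continuous_id continuous_const
    intro x hx
    simp only [id] at hx
    subst hx
    have h1 : (L : ℝ) * ((k : ℝ) / L) = k := by field_simp
    rw [h1]
    ring_nf

/-- `χ_k` as a map of the unit interval to itself (its values on `[0,1]` lie in `[0,1]`,
and `Set.projIcc` records this). -/
def chiI (L k : ℕ) (hk : k ≤ L) : C(unitInterval, unitInterval) :=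
  ⟨fun t => Set.projIcc (0 : ℝ) 1 zero_le_one (chi L k (t : ℝ)),
    continuous_projIcc.comp ((chi_continuous L k hk).comp continuous_subtype_val)⟩

/-- `ξ_n(T)(x₁,…,x_{n+1}) = (T(x₁,…,x_n), 0)`. -/
def xiT {X : Type} [TopologicalSpace X] {n : ℕ} (T : C(Cube n, X)) :
    C(Cube (n + 1), X × unitInterval) :=
  ⟨fun x => (T (Fin.init x), 0), by
    exact (T.continuous.comp
      (continuous_pi fun i : Fin n => continuous_apply i.castSucc)).prodMk continuous_const⟩

/-- `ψ_{n,k}(T)(x₁,…,x_{n+1}) = (T(x₁,…,x_n), χ_k(x_{n+1}))`. -/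
def psiT (L : ℕ) {X : Type} [TopologicalSpace X] {n : ℕ} (k : Fin (L + 1)) (T : C(Cube n, X)) :
    C(Cube (n + 1), X × unitInterval) :=
  ⟨fun x => (T (Fin.init x), chiI L k (Fin.is_le k) (x (Fin.last n))), by
    exact (T.continuous.comp
      (continuous_pi fun i : Fin n => continuous_apply i.castSucc)).prodMk
      ((chiI L k (Fin.is_le k)).continuous.comp (continuous_apply (Fin.last n)))⟩

/-- The chain homotopy `Θ_n(T) = Σ_k r_k · (ξ_n(T) − ψ_{n,k}(T))`. -/
def Theta (R : Type) [CommRing R] (L : ℕ) (r : Fin (L + 1) → R) (X : Type)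
    [TopologicalSpace X] (n : ℕ) : Kmod R X n →ₗ[R] Kmod R (X × unitInterval) (n + 1) :=
  Finsupp.lift (Kmod R (X × unitInterval) (n + 1)) R C(Cube n, X) fun T =>
    ∑ k : Fin (L + 1), r k • (Finsupp.single (xiT T) (1 : R) - Finsupp.single (psiT L k T) (1 : R))

/-- The chain map induced by a continuous map `f : X → Y`. -/
def chainMap (R : Type) [CommRing R] {X Y : Type} [TopologicalSpace X] [TopologicalSpace Y]
    (f : C(X, Y)) (n : ℕ) : Kmod R X n →ₗ[R] Kmod R Y n :=
  Finsupp.lift (Kmod R Y n) R C(Cube n, X) fun T => Finsupp.single (f.comp T) (1 : R)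

/-- The inclusion `x ↦ (x, t)` of `X` into `X × I`. -/
def epsMap (X : Type) [TopologicalSpace X] (t : unitInterval) : C(X, X × unitInterval) :=
  ⟨fun x => (x, t), continuous_id.prodMk continuous_const⟩

section Aux

lemma insertNth_castSucc_snoc {n : ℕ} {β : Type*} (j : Fin (n + 1)) (c : β) (x : Fin (n + 1) → β) :
    Fin.insertNth (α := fun _ => β) j.castSucc c x
      = Fin.snoc (Fin.insertNth (α := fun _ => β) j c (Fin.init x)) (x (Fin.last n)) := by
  rw [Fin.insertNth_eq_iff]
  constructor
  · rw [Fin.snoc_castSucc, Fin.insertNth_apply_same]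
  · funext i
    rw [Fin.removeNth]
    induction i using Fin.lastCases with
    | last =>
        rw [Fin.succAbove_castSucc_of_le _ _ (Fin.le_last j), Fin.succ_last, Fin.snoc_last]
    | cast i =>
        rw [Fin.castSucc_succAbove_castSucc, Fin.snoc_castSucc,
          Fin.insertNth_apply_succAbove]
        rfl

variable {X : Type} [TopologicalSpace X]

lemma face_xiT_last {n : ℕ} (T : C(Cube n, X)) (c : unitInterval) :
    face (xiT T) (Fin.last n) c = (epsMap X 0).comp T := by
  refine ContinuousMap.ext fun x => ?_
  show xiT T ((Fin.last n).insertNth c x) = ((epsMap X 0).comp T) x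
  simp [xiT, epsMap, Fin.insertNth_last', Fin.init_snoc]

lemma face_psiT_last {L n : ℕ} (k : Fin (L + 1)) (T : C(Cube n, X)) (c : unitInterval) :
    face (psiT L k T) (Fin.last n) c = (epsMap X (chiI L k (Fin.is_le k) c)).comp T := by
  refine ContinuousMap.ext fun x => ?_
  show psiT L k T ((Fin.last n).insertNth c x) = ((epsMap X (chiI L k (Fin.is_le k) c)).comp T) x
  simp [psiT, epsMap, Fin.insertNth_last', Fin.init_snoc, Fin.snoc_last]

lemma face_xiT_castSucc {n : ℕ} (T : C(Cube (n + 1), X)) (j : Fin (n + 1)) (c : unitInterval) :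
    face (xiT T) j.castSucc c = xiT (face T j c) := by
  refine ContinuousMap.ext fun x => ?_
  show xiT T (j.castSucc.insertNth c x) = xiT (face T j c) x
  simp [xiT, face, faceMap, insertNth_castSucc_snoc, Fin.init_snoc]

lemma face_psiT_castSucc {L n : ℕ} (k : Fin (L + 1)) (T : C(Cube (n + 1), X)) (j : Fin (n + 1))
    (c : unitInterval) :
    face (psiT L k T) j.castSucc c = psiT L k (face T j c) := by
  refine ContinuousMap.ext fun x => ?_
  show psiT L k T (j.castSucc.insertNth c x) = psiT L k (face T j c) x
  simp [psiT, face, faceMap, insertNth_castSucc_snoc, Fin.init_snoc, Fin.snoc_last]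

end Aux
section Chi

lemma chi_vertex (L : ℕ) (k : ℕ) (hk : k ≤ L) (i : Fin (L + 1)) :
    chi L k ((i : ℝ) / L) = if (i : ℕ) = k then 1 else 0 := by
  rcases Nat.eq_zero_or_pos L with hL | hL
  · subst hL
    interval_cases k
    have hi : (i : ℕ) = 0 := by omega
    simp [chi, hi]
  have hLR : (0 : ℝ) < L := by exact_mod_cast hL
  have hL0 : (L : ℝ) ≠ 0 := ne_of_gt hLR
  have hmul : (L : ℝ) * ((i : ℝ) / L) = (i : ℝ) := by field_simp
  have hiL : (i : ℕ) ≤ L := by omega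
  unfold chi
  rcases eq_or_ne k 0 with h0 | h0
  · subst h0
    rw [if_pos rfl, hmul]
    rcases eq_or_ne (i : ℕ) 0 with hi | hi
    · simp [hi]
    · rw [if_neg hi]
      have h1 : (1 : ℝ) ≤ i := by exact_mod_cast Nat.one_le_iff_ne_zero.2 hi
      rw [max_eq_right (by linarith)]
  rcases eq_or_ne k L with hkL | hkL
  · rw [if_neg h0, if_pos hkL, hmul]
    rcases eq_or_ne (i : ℕ) k with hi | hi
    · rw [if_pos hi, hi, hkL]
      simp
    · rw [if_neg hi]
      rw [hkL] at hi
      have hlt : ((i : ℕ) : ℝ) + 1 ≤ L := by exact_mod_cast lt_of_le_of_ne hiL hi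
      rw [max_eq_right (by linarith)]
  · rw [if_neg h0, if_neg hkL, hmul]
    rcases le_or_gt ((i : ℕ)) k with hik | hik
    · have hikR : ((i : ℕ) : ℝ) ≤ k := by exact_mod_cast hik
      rw [if_pos (by gcongr)]
      rcases eq_or_ne ((i : ℕ)) k with hi | hi
      · rw [if_pos hi, hi]
        rw [max_eq_left (by linarith [(by positivity : (0:ℝ) ≤ (k:ℝ))])]
        ring
      · rw [if_neg hi]
        have : ((i : ℕ) : ℝ) + 1 ≤ k := by exact_mod_cast lt_of_le_of_ne hik hi
        rw [max_eq_right (by linarith)]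
    · have hikR : ((k : ℕ) : ℝ) + 1 ≤ i := by exact_mod_cast hik
      have hikR' : ((k : ℕ) : ℝ) < i := by exact_mod_cast hik
      have hlt : (k : ℝ) / L < (i : ℝ) / L := by gcongr
      rw [if_neg (not_le.mpr hlt), if_neg (by omega)]
      rw [max_eq_right (by linarith)]

end Chi

lemma chiI_vertexVal (L : ℕ) (k i : Fin (L + 1)) :
    chiI L k (Fin.is_le k) (vertexVal L i) = if i = k then 1 else 0 := by
  show Set.projIcc (0 : ℝ) 1 zero_le_one (chi L (k : ℕ) ((vertexVal L i : ℝ))) = _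
  have hv : ((vertexVal L i : ℝ)) = (i : ℝ) / L := rfl
  rw [hv, chi_vertex L k (Fin.is_le k) i]
  simp only [Fin.val_eq_val]
  split_ifs
  · exact Subtype.ext (by simp [Set.coe_projIcc])
  · exact Subtype.ext (by simp [Set.coe_projIcc])
section Alg

variable {R : Type} [CommRing R] {L : ℕ} {X Y : Type} [TopologicalSpace X] [TopologicalSpace Y]

lemma bdry_single (m : Fin (L + 1) → R) (n : ℕ) (T : C(Cube (n + 1), X)) :
    bdry R m X n (Finsupp.single T 1) =
      ∑ j : Fin (n + 1), ∑ i : Fin (L + 1),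
        ((-1 : R) ^ (j : ℕ) * m i) • Finsupp.single (face T j (vertexVal L i)) (1 : R) := by
  rw [bdry, Finsupp.lift_apply, Finsupp.sum_single_index (by simp), one_smul]

lemma Theta_single (r : Fin (L + 1) → R) (n : ℕ) (T : C(Cube n, X)) :
    Theta R L r X n (Finsupp.single T 1) =
      ∑ k : Fin (L + 1),
        r k • (Finsupp.single (xiT T) (1 : R) - Finsupp.single (psiT L k T) (1 : R)) := by
  rw [Theta, Finsupp.lift_apply, Finsupp.sum_single_index (by simp), one_smul]

lemma chainMap_single (f : C(X, Y)) (n : ℕ) (T : C(Cube n, X)) :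
    chainMap R f n (Finsupp.single T 1) = Finsupp.single (f.comp T) (1 : R) := by
  rw [chainMap, Finsupp.lift_apply, Finsupp.sum_single_index (by simp), one_smul]

lemma last_part (m r : Fin (L + 1) → R) (hr : ∑ k, r k * m k = 1) {n : ℕ}
    (T : C(Cube n, X)) (s : R) :
    ∑ k : Fin (L + 1), r k • ∑ i : Fin (L + 1), (s * m i) •
        (Finsupp.single ((epsMap X 0).comp T) (1 : R)
          - Finsupp.single ((epsMap X (if i = k then 1 else 0)).comp T) (1 : R))
      = s • (Finsupp.single ((epsMap X 0).comp T) (1 : R)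
          - Finsupp.single ((epsMap X 1).comp T) (1 : R)) := by
  have h1 : ∀ k : Fin (L + 1),
      ∑ i : Fin (L + 1), (s * m i) •
        (Finsupp.single ((epsMap X 0).comp T) (1 : R)
          - Finsupp.single ((epsMap X (if i = k then 1 else 0)).comp T) (1 : R))
      = (s * m k) • (Finsupp.single ((epsMap X 0).comp T) (1 : R)
          - Finsupp.single ((epsMap X 1).comp T) (1 : R)) := by
    intro k
    rw [Finset.sum_eq_single k]
    · rw [if_pos rfl]
    · intro b _ hb
      rw [if_neg hb, sub_self, smul_zero]
    · intro h
      exact absurd (Finset.mem_univ k) h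
  simp only [h1, smul_smul]
  rw [← Finset.sum_smul]
  congr 1
  calc ∑ k, r k * (s * m k) = s * ∑ k, r k * m k := by
        rw [Finset.mul_sum]; exact Finset.sum_congr rfl fun k _ => by ring
    _ = s := by rw [hr, mul_one]

end Alg
lemma bdry_single_split {R : Type} [CommRing R] {L : ℕ} {Y : Type} [TopologicalSpace Y]
    (m : Fin (L + 1) → R) (n : ℕ) (S : C(Cube (n + 2), Y)) :
    bdry R m Y (n + 1) (Finsupp.single S 1)
      = ∑ j : Fin (n + 1), ∑ i : Fin (L + 1),
          ((-1 : R) ^ (j : ℕ) * m i) • Finsupp.single (face S j.castSucc (vertexVal L i)) (1 : R)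
        + ∑ i : Fin (L + 1),
          ((-1 : R) ^ (n + 1) * m i) •
            Finsupp.single (face S (Fin.last (n + 1)) (vertexVal L i)) (1 : R) := by
  rw [bdry_single m (n + 1) S, Fin.sum_univ_castSucc]
  simp only [Fin.coe_castSucc, Fin.val_last]

lemma bdry_single_zero {R : Type} [CommRing R] {L : ℕ} {Y : Type} [TopologicalSpace Y]
    (m : Fin (L + 1) → R) (S : C(Cube 1, Y)) :
    bdry R m Y 0 (Finsupp.single S 1)
      = ∑ i : Fin (L + 1),
          ((-1 : R) ^ (0 : ℕ) * m i) •
            Finsupp.single (face S (Fin.last 0) (vertexVal L i)) (1 : R) := by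
  rw [bdry_single m 0 S, Fin.sum_univ_succ, Fin.sum_univ_zero, add_zero]
  rw [show (0 : Fin (0 + 1)) = Fin.last 0 from rfl]
  simp only [Fin.val_last]
/-- If `Σ r_k·m_k = 1` then `Θ` is a chain homotopy between `e₀` and `e₁`:
`∂_{n+1} ∘ Θ_n = (-1)^{n+2}(e₀ − e₁) + Θ_{n-1} ∘ ∂_n` on every singular cube `T`
(with `Θ_{-1} = 0`, so in degree `0` the last term is absent). -/
theorem chain_homotopy_formula (R : Type) [CommRing R] (L : ℕ) (m r : Fin (L + 1) → R)
    (hr : ∑ k, r k * m k = 1) (X : Type) [TopologicalSpace X] :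
    (∀ T : C(Cube 0, X),
      bdry R m (X × unitInterval) 0 (Theta R L r X 0 (Finsupp.single T 1))
        = ((-1 : R) ^ (0 + 2)) •
            (chainMap R (epsMap X 0) 0 (Finsupp.single T 1)
              - chainMap R (epsMap X 1) 0 (Finsupp.single T 1))) ∧
    (∀ (n : ℕ) (T : C(Cube (n + 1), X)),
      bdry R m (X × unitInterval) (n + 1) (Theta R L r X (n + 1) (Finsupp.single T 1))
        = ((-1 : R) ^ (n + 1 + 2)) •
            (chainMap R (epsMap X 0) (n + 1) (Finsupp.single T 1)
              - chainMap R (epsMap X 1) (n + 1) (Finsupp.single T 1))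
          + Theta R L r X n (bdry R m X n (Finsupp.single T 1))) := by
  constructor
  · intro T
    rw [Theta_single, map_sum]
    simp only [map_smul, map_sub, bdry_single_zero, face_xiT_last, face_psiT_last,
      chiI_vertexVal]
    simp only [← smul_sub, ← Finset.sum_sub_distrib]
    rw [last_part m r hr T ((-1 : R) ^ (0 : ℕ)), chainMap_single, chainMap_single]
    norm_num
  · intro n T
    rw [Theta_single, map_sum]
    simp only [map_smul, map_sub, bdry_single_split, face_xiT_castSucc, face_xiT_last,
      face_psiT_castSucc, face_psiT_last, chiI_vertexVal]
    simp only [add_sub_add_comm]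
    simp only [← Finset.sum_sub_distrib, ← smul_sub]
    simp only [smul_add, Finset.sum_add_distrib]
    rw [last_part m r hr T ((-1 : R) ^ (n + 1))]
    rw [chainMap_single, chainMap_single, bdry_single, map_sum]
    simp only [map_sum, map_smul, Theta_single]
    have hsgn : ((-1 : R) ^ (n + 1 + 2)) = (-1 : R) ^ (n + 1) := by
      rw [pow_add]; norm_num
    rw [hsgn]
    have hswap : ∑ k : Fin (L + 1), r k • ∑ j : Fin (n + 1), ∑ i : Fin (L + 1),
        ((-1 : R) ^ (j : ℕ) * m i) •
          (Finsupp.single (xiT (face T j (vertexVal L i))) (1 : R)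
            - Finsupp.single (psiT L k (face T j (vertexVal L i))) (1 : R))
        = ∑ j : Fin (n + 1), ∑ i : Fin (L + 1), ((-1 : R) ^ (j : ℕ) * m i) •
            ∑ k : Fin (L + 1), r k •
              (Finsupp.single (xiT (face T j (vertexVal L i))) (1 : R)
                - Finsupp.single (psiT L k (face T j (vertexVal L i))) (1 : R)) := by
      simp only [Finset.smul_sum]
      rw [Finset.sum_comm]
      refine Finset.sum_congr rfl fun j _ => ?_
      rw [Finset.sum_comm]
      refine Finset.sum_congr rfl fun i _ => Finset.sum_congr rfl fun k _ => ?_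
      rw [smul_smul, smul_smul, mul_comm]
    rw [hswap]
    exact add_comm _ _
end
end

section
/- With the chain homotopy Θ as above and u ∈ K_n(X) a cycle (∂_n(u) = 0), the chain e₀(u) − e₁(u) ∈ K_n(X × I) is a boundary, i.e. lies in the image of ∂_{n+1}; consequently H_n(e₀) = H_n(e₁) on homology, and the generalized cubical homology with weight m satisfies the homotopy axiom whenever the ideal generated by {m₀,…,m_L} is all of R. -/
open scoped BigOperators

noncomputable section

namespace HomAux

def czero : C(unitInterval, unitInterval) := ContinuousMap.const _ 0

def tent (L : ℕ) (k : Fin (L + 1)) : C(unitInterval, unitInterval) :=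
  ⟨fun t => Set.projIcc (0:ℝ) 1 zero_le_one (1 - (L:ℝ) * |(t : ℝ) - (k : ℝ) / L|),
   continuous_projIcc.comp (by fun_prop)⟩

lemma czero_apply (t : unitInterval) : czero t = 0 := rfl

lemma tent_vertex (L : ℕ) (k i : Fin (L + 1)) :
    tent L k (vertexVal L i) = if i = k then 1 else 0 := by
  have hv : ((vertexVal L i : unitInterval) : ℝ) = (i : ℝ) / L := rfl
  by_cases hik : i = k
  · subst hik
    simp only [if_pos rfl]
    have : (1 : ℝ) - (L:ℝ) * |((vertexVal L i : unitInterval) : ℝ) - (i : ℝ) / L| = 1 := by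
      rw [hv]; simp
    apply Subtype.ext
    show (Set.projIcc (0:ℝ) 1 zero_le_one _ : ℝ) = 1
    rw [this, Set.projIcc_right]
  · simp only [if_neg hik]
    have hL : (0:ℝ) < L := by
      rcases Nat.eq_zero_or_pos L with h0 | h0
      · subst h0; exact absurd (Fin.ext (by omega)) hik
      · exact_mod_cast h0
    have hne : ((i : ℕ) : ℤ) - ((k : ℕ) : ℤ) ≠ 0 := by
      rw [sub_ne_zero]
      exact_mod_cast fun h => hik (Fin.ext h)
    have h1 : (1 : ℝ) ≤ |(i : ℝ) - (k : ℝ)| := by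
      have := Int.one_le_abs hne
      have h2 : ((1:ℤ) : ℝ) ≤ ((|((i:ℕ):ℤ) - ((k:ℕ):ℤ)| : ℤ) : ℝ) := by exact_mod_cast this
      push_cast at h2
      convert h2 using 2
    have hval : (1 : ℝ) - (L:ℝ) * |((vertexVal L i : unitInterval) : ℝ) - (k : ℝ) / L| ≤ 0 := by
      rw [hv, div_sub_div_same, abs_div, abs_of_pos hL, mul_div_cancel₀ _ hL.ne']
      linarith
    apply Subtype.ext
    show (Set.projIcc (0:ℝ) 1 zero_le_one _ : ℝ) = 0
    rw [Set.projIcc_of_le_left _ hval]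

end HomAux

namespace HomAux

def prism {X : Type} [TopologicalSpace X] {n : ℕ} (φ : C(unitInterval, unitInterval))
    (T : C(Cube n, X)) : C(Cube (n + 1), X × unitInterval) where
  toFun y := (T (Fin.init y), φ (y (Fin.last n)))
  continuous_toFun := by
    apply Continuous.prodMk
    · exact T.continuous.comp (continuous_pi fun i => continuous_apply _)
    · exact φ.continuous.comp (continuous_apply _)

lemma face_prism_last {X : Type} [TopologicalSpace X] {n : ℕ} (φ : C(unitInterval, unitInterval))
    (T : C(Cube n, X)) (c : unitInterval) :
    face (prism φ T) (Fin.last n) c = (epsMap X (φ c)).comp T := by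
  refine ContinuousMap.ext fun x => ?_
  show prism φ T ((Fin.last n).insertNth c x) = ((T x, φ c) : X × unitInterval)
  rw [Fin.insertNth_last']
  show (T (Fin.init ((Fin.snoc x c : Cube (n + 1)))), φ ((Fin.snoc x c : Cube (n + 1)) (Fin.last n))) = _
  rw [Fin.init_snoc, Fin.snoc_last]

lemma face_prism_castSucc {X : Type} [TopologicalSpace X] {n : ℕ} (φ : C(unitInterval, unitInterval))
    (T : C(Cube (n + 1), X)) (j : Fin (n + 1)) (d : unitInterval) :
    face (prism φ T) j.castSucc d = prism φ (face T j d) := by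
  refine ContinuousMap.ext fun x => ?_
  have h2 : (j.castSucc.insertNth d x : Cube (n + 2)) (Fin.last (n + 1)) = x (Fin.last n) := by
    have h : j.castSucc.succAbove (Fin.last n) = Fin.last (n + 1) := by
      rw [Fin.succAbove_castSucc_of_le j (Fin.last n) (Fin.le_last j), Fin.succ_last]
    rw [← h, Fin.insertNth_apply_succAbove]
  have h1 : Fin.init (j.castSucc.insertNth d x : Cube (n + 2)) = (j.insertNth d (Fin.init x) : Cube (n + 1)) := by
    funext i
    rcases eq_or_ne i j with rfl | hij
    · show (i.castSucc.insertNth d x : Cube (n + 2)) i.castSucc = (i.insertNth d (Fin.init x) : Cube (n + 1)) i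
      rw [Fin.insertNth_apply_same, Fin.insertNth_apply_same]
    · obtain ⟨i', rfl⟩ := Fin.exists_succAbove_eq hij
      show (j.castSucc.insertNth d x : Cube (n + 2)) (j.succAbove i').castSucc = _
      rw [← Fin.castSucc_succAbove_castSucc, Fin.insertNth_apply_succAbove,
          Fin.insertNth_apply_succAbove]
      rfl
  show (T (Fin.init (j.castSucc.insertNth d x : Cube (n + 2))), φ ((j.castSucc.insertNth d x : Cube (n + 2)) (Fin.last (n + 1)))) = _
  rw [h1, h2]
  rfl

end HomAux

namespace HomAux

variable (R : Type) [CommRing R] {L : ℕ} (m : Fin (L + 1) → R)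

lemma lift_single {M : Type} [AddCommGroup M] [Module R M] {α : Type} (f : α → M) (a : α) :
    Finsupp.lift M R α f (Finsupp.single a (1 : R)) = f a := by simp

lemma bdry_single {X : Type} [TopologicalSpace X] (n : ℕ) (T : C(Cube (n + 1), X)) :
    bdry R m X n (Finsupp.single T 1) =
      ∑ j : Fin (n + 1), ∑ i : Fin (L + 1),
        ((-1 : R) ^ (j : ℕ) * m i) • Finsupp.single (face T j (vertexVal L i)) (1 : R) :=
  lift_single R _ T

lemma chainMap_single {X Y : Type} [TopologicalSpace X] [TopologicalSpace Y] (f : C(X, Y)) (n : ℕ)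
    (T : C(Cube n, X)) :
    chainMap R f n (Finsupp.single T 1) = Finsupp.single (f.comp T) 1 :=
  lift_single R _ T

def prismL (X : Type) [TopologicalSpace X] (φ : C(unitInterval, unitInterval)) (n : ℕ) :
    Kmod R X n →ₗ[R] Kmod R (X × unitInterval) (n + 1) :=
  Finsupp.lift _ R _ fun T => Finsupp.single (prism φ T) (1 : R)

lemma prismL_single {X : Type} [TopologicalSpace X] (φ : C(unitInterval, unitInterval)) (n : ℕ)
    (T : C(Cube n, X)) :
    prismL R X φ n (Finsupp.single T 1) = Finsupp.single (prism φ T) 1 := lift_single R _ T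

lemma bdry_prism_zero {X : Type} [TopologicalSpace X] (φ : C(unitInterval, unitInterval))
    (T : C(Cube 0, X)) :
    bdry R m (X × unitInterval) 0 (Finsupp.single (prism φ T) 1) =
      ∑ i : Fin (L + 1), m i • Finsupp.single ((epsMap X (φ (vertexVal L i))).comp T) (1 : R) := by
  rw [bdry_single, Fin.sum_univ_one]
  refine Finset.sum_congr rfl fun i _ => ?_
  rw [show (0 : Fin 1) = Fin.last 0 from rfl, face_prism_last]
  norm_num

lemma bdry_prism_succ {X : Type} [TopologicalSpace X] (φ : C(unitInterval, unitInterval))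
    (n : ℕ) (T : C(Cube (n + 1), X)) :
    bdry R m (X × unitInterval) (n + 1) (Finsupp.single (prism φ T) 1) =
      (∑ j : Fin (n + 1), ∑ i : Fin (L + 1),
        ((-1 : R) ^ (j : ℕ) * m i) • Finsupp.single (prism φ (face T j (vertexVal L i))) (1 : R))
      + ∑ i : Fin (L + 1),
          ((-1 : R) ^ (n + 1) * m i) • Finsupp.single ((epsMap X (φ (vertexVal L i))).comp T) (1 : R) := by
  rw [bdry_single, Fin.sum_univ_castSucc]
  congr 1
  · refine Finset.sum_congr rfl fun j _ => Finset.sum_congr rfl fun i _ => ?_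
    rw [face_prism_castSucc, Fin.coe_castSucc]
  · refine Finset.sum_congr rfl fun i _ => ?_
    rw [face_prism_last, Fin.val_last]

lemma prism_bdry_single {X : Type} [TopologicalSpace X] (φ : C(unitInterval, unitInterval))
    (n : ℕ) (T : C(Cube (n + 1), X)) :
    prismL R X φ n (bdry R m X n (Finsupp.single T 1)) =
      ∑ j : Fin (n + 1), ∑ i : Fin (L + 1),
        ((-1 : R) ^ (j : ℕ) * m i) • Finsupp.single (prism φ (face T j (vertexVal L i))) (1 : R) := by
  rw [bdry_single, map_sum]
  refine Finset.sum_congr rfl fun j _ => ?_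
  rw [map_sum]
  refine Finset.sum_congr rfl fun i _ => ?_
  rw [map_smul, prismL_single]

lemma bdry_prismL_zero (X : Type) [TopologicalSpace X] (φ : C(unitInterval, unitInterval)) :
    (bdry R m (X × unitInterval) 0).comp (prismL R X φ 0) =
      ∑ i : Fin (L + 1), m i • chainMap R (epsMap X (φ (vertexVal L i))) 0 := by
  apply Finsupp.lhom_ext
  intro T b
  rw [← Finsupp.smul_single_one T b, map_smul, LinearMap.comp_apply, prismL_single,
    bdry_prism_zero]
  simp only [LinearMap.sum_apply, LinearMap.smul_apply, map_smul, chainMap_single,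
    Finset.smul_sum, smul_comm b]

lemma bdry_prismL_succ (X : Type) [TopologicalSpace X] (φ : C(unitInterval, unitInterval))
    (n : ℕ) :
    (bdry R m (X × unitInterval) (n + 1)).comp (prismL R X φ (n + 1)) =
      (prismL R X φ n).comp (bdry R m X n) +
        ∑ i : Fin (L + 1), ((-1 : R) ^ (n + 1) * m i) • chainMap R (epsMap X (φ (vertexVal L i))) (n + 1) := by
  apply Finsupp.lhom_ext
  intro T b
  rw [← Finsupp.smul_single_one T b]
  simp only [map_smul, LinearMap.comp_apply, LinearMap.add_apply, LinearMap.sum_apply,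
    LinearMap.smul_apply]
  rw [prismL_single, bdry_prism_succ, prism_bdry_single]
  simp only [map_smul, chainMap_single, smul_add, Finset.smul_sum, smul_comm b]

end HomAux

namespace HomAux

variable (R : Type) [CommRing R] {L : ℕ} (m r : Fin (L + 1) → R)

def theta (r : Fin (L + 1) → R) (X : Type) [TopologicalSpace X] (n : ℕ) :
    Kmod R X n →ₗ[R] Kmod R (X × unitInterval) (n + 1) :=
  (∑ k : Fin (L + 1), r k • prismL R X (tent L k) n) - (∑ k : Fin (L + 1), r k) • prismL R X czero n

lemma combo (hspan : ∑ k, r k * m k = 1) (X : Type) [TopologicalSpace X] (n : ℕ)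
    (u : Kmod R X n) :
    (∑ k : Fin (L + 1), r k • (∑ i : Fin (L + 1), m i • chainMap R (epsMap X (tent L k (vertexVal L i))) n u))
      - (∑ k : Fin (L + 1), r k) • (∑ i : Fin (L + 1), m i • chainMap R (epsMap X (czero (vertexVal L i))) n u)
    = chainMap R (epsMap X 1) n u - chainMap R (epsMap X 0) n u := by
  set C1 := chainMap R (epsMap X 1) n u with hC1
  set C0 := chainMap R (epsMap X 0) n u with hC0
  have hz : ∀ i : Fin (L + 1), chainMap R (epsMap X (czero (vertexVal L i))) n u = C0 := fun i => rfl
  have hinner : ∀ k : Fin (L + 1),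
      (∑ i : Fin (L + 1), m i • chainMap R (epsMap X (tent L k (vertexVal L i))) n u)
        = (∑ i : Fin (L + 1), m i • C0) + (m k • C1 - m k • C0) := by
    intro k
    have : ∀ i : Fin (L + 1),
        m i • chainMap R (epsMap X (tent L k (vertexVal L i))) n u
          = m i • C0 + (if i = k then m i • C1 - m i • C0 else 0) := by
      intro i
      rw [tent_vertex]
      split_ifs with h
      · subst h; rw [← hC1]; abel
      · rw [← hC0]; abel
    rw [Finset.sum_congr rfl fun i _ => this i, Finset.sum_add_distrib,
      Finset.sum_ite_eq' Finset.univ k (fun i => m i • C1 - m i • C0), if_pos (Finset.mem_univ k)]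
  rw [Finset.sum_congr rfl fun k _ => by rw [hinner k]]
  simp only [hz]
  simp only [smul_add, smul_sub, smul_smul, Finset.sum_add_distrib, Finset.sum_sub_distrib,
    ← Finset.sum_smul, ← Finset.sum_mul, hspan, one_smul]
  abel

lemma bdry_theta (hspan : ∑ k, r k * m k = 1) (X : Type) [TopologicalSpace X] (n : ℕ)
    (u : Kmod R X n) (hu : u ∈ cyclesMod R m X n) :
    bdry R m (X × unitInterval) n (theta R r X n u) =
      ((-1 : R) ^ n) • (chainMap R (epsMap X 1) n u - chainMap R (epsMap X 0) n u) := by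
  have expand : theta R r X n u =
      (∑ k : Fin (L + 1), r k • prismL R X (tent L k) n u)
        - (∑ k : Fin (L + 1), r k) • prismL R X czero n u := by
    simp [theta, LinearMap.sub_apply, LinearMap.sum_apply, LinearMap.smul_apply]
  rw [expand, map_sub, map_sum, map_smul]
  cases n with
  | zero =>
    have hb : ∀ φ (v : Kmod R X 0), bdry R m (X × unitInterval) 0 (prismL R X φ 0 v)
        = ∑ i : Fin (L + 1), m i • chainMap R (epsMap X (φ (vertexVal L i))) 0 v := by
      intro φ v
      have := LinearMap.congr_fun (bdry_prismL_zero R m X φ) v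
      simpa [LinearMap.sum_apply, LinearMap.smul_apply] using this
    simp only [map_smul, hb]
    rw [pow_zero, one_smul]
    exact combo R m r hspan X 0 u
  | succ n =>
    have hu' : bdry R m X n u = 0 := hu
    have hb : ∀ φ (v : Kmod R X (n + 1)), bdry R m (X × unitInterval) (n + 1) (prismL R X φ (n + 1) v)
        = prismL R X φ n (bdry R m X n v)
          + ∑ i : Fin (L + 1), ((-1 : R) ^ (n + 1) * m i) • chainMap R (epsMap X (φ (vertexVal L i))) (n + 1) v := by
      intro φ v
      have := LinearMap.congr_fun (bdry_prismL_succ R m X φ n) v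
      simpa [LinearMap.add_apply, LinearMap.sum_apply, LinearMap.smul_apply] using this
    simp only [map_smul, hb, hu', map_zero, zero_add]
    have hpull : ∀ (c : R) (w : Kmod R (X × unitInterval) (n + 1)),
        ((-1 : R) ^ (n + 1) * c) • w = ((-1 : R) ^ (n + 1)) • (c • w) := fun c w => (smul_smul _ _ _).symm
    simp only [hpull, ← Finset.smul_sum, smul_comm (r _) (((-1 : R) ^ (n + 1))),
      smul_comm (∑ k, r k) (((-1 : R) ^ (n + 1)))]
    rw [← smul_sub]
    congr 1
    exact combo R m r hspan X (n + 1) u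

end HomAux

namespace HomAux

variable (R : Type) [CommRing R] {L : ℕ} (m r : Fin (L + 1) → R)

lemma chainMap_bdry {X Y : Type} [TopologicalSpace X] [TopologicalSpace Y] (f : C(X, Y)) (n : ℕ)
    (u : Kmod R X (n + 1)) :
    bdry R m Y n (chainMap R f (n + 1) u) = chainMap R f n (bdry R m X n u) := by
  have h : (bdry R m Y n).comp (chainMap R f (n + 1)) = (chainMap R f n).comp (bdry R m X n) := by
    apply Finsupp.lhom_ext
    intro T b
    rw [← Finsupp.smul_single_one T b]
    simp only [map_smul, LinearMap.comp_apply]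
    congr 1
    rw [chainMap_single, bdry_single, bdry_single, map_sum]
    refine Finset.sum_congr rfl fun j _ => ?_
    rw [map_sum]
    refine Finset.sum_congr rfl fun i _ => ?_
    rw [map_smul, chainMap_single]
    rfl
  exact LinearMap.congr_fun h u

lemma chainMap_comp {X Y Z : Type} [TopologicalSpace X] [TopologicalSpace Y] [TopologicalSpace Z]
    (f : C(Y, Z)) (g : C(X, Y)) (n : ℕ) (u : Kmod R X n) :
    chainMap R (f.comp g) n u = chainMap R f n (chainMap R g n u) := by
  have h : chainMap R (f.comp g) n = (chainMap R f n).comp (chainMap R g n) := by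
    apply Finsupp.lhom_ext
    intro T b
    rw [← Finsupp.smul_single_one T b]
    simp only [map_smul, LinearMap.comp_apply]
    rw [chainMap_single, chainMap_single, chainMap_single, ContinuousMap.comp_assoc]
  exact LinearMap.congr_fun h u

lemma key (hspan : ∑ k, r k * m k = 1) (X : Type) [TopologicalSpace X] (n : ℕ)
    (u : Kmod R X n) (hu : u ∈ cyclesMod R m X n) :
    bdry R m (X × unitInterval) n (((-1 : R) ^ (n + 1)) • theta R r X n u) =
      chainMap R (epsMap X 0) n u - chainMap R (epsMap X 1) n u := by
  rw [map_smul, bdry_theta R m r hspan X n u hu, smul_smul, ← pow_add]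
  have hodd : Odd (n + 1 + n) := ⟨n, by omega⟩
  rw [hodd.neg_one_pow, neg_smul, one_smul, neg_sub]

end HomAux

/-- If the weight `m` generates the unit ideal, then for every cycle `u`
the chain `e₀(u) − e₁(u)` is a boundary; consequently (since a homotopy `H : f ≃ g`
factors `f = H∘e₀`, `g = H∘e₁`) homotopic maps induce chain maps that agree on homology,
i.e. the generalized cubical homology of weight `m` satisfies the homotopy axiom. -/
theorem homotopy_axiom_of_span (R : Type) [CommRing R] (L : ℕ) (m : Fin (L + 1) → R)
    (hspan : ∃ r : Fin (L + 1) → R, ∑ k, r k * m k = 1) :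
    (∀ (X : Type) [TopologicalSpace X] (n : ℕ) (u : Kmod R X n), u ∈ cyclesMod R m X n →
      chainMap R (epsMap X 0) n u - chainMap R (epsMap X 1) n u
        ∈ LinearMap.range (bdry R m (X × unitInterval) n)) ∧
    (∀ (X Y : Type) [TopologicalSpace X] [TopologicalSpace Y] (f g : C(X, Y)),
      f.Homotopic g → ∀ (n : ℕ) (u : Kmod R X n), u ∈ cyclesMod R m X n →
        chainMap R f n u - chainMap R g n u ∈ LinearMap.range (bdry R m Y n)) := by 
  obtain ⟨r, hspan⟩ := hspan
  have part1 : ∀ (X : Type) [TopologicalSpace X] (n : ℕ) (u : Kmod R X n), u ∈ cyclesMod R m X n →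
      chainMap R (epsMap X 0) n u - chainMap R (epsMap X 1) n u
        ∈ LinearMap.range (bdry R m (X × unitInterval) n) := by
    intro X _ n u hu
    exact ⟨((-1 : R) ^ (n + 1)) • HomAux.theta R r X n u, HomAux.key R m r hspan X n u hu⟩
  refine ⟨part1, ?_⟩
  intro X Y _ _ f g hfg n u hu
  obtain ⟨H⟩ := hfg
  obtain ⟨w, hw⟩ := part1 X n u hu
  set H' : C(X × unitInterval, Y) := H.toContinuousMap.comp ContinuousMap.prodSwap with hH'
  have hf : H'.comp (epsMap X 0) = f := ContinuousMap.ext fun x => H.apply_zero x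
  have hg : H'.comp (epsMap X 1) = g := ContinuousMap.ext fun x => H.apply_one x
  refine ⟨chainMap R H' (n + 1) w, ?_⟩
  rw [HomAux.chainMap_bdry, hw, map_sub, ← HomAux.chainMap_comp, ← HomAux.chainMap_comp, hf, hg]
end
end

section
/- If the generalized cubical homology theory H with weight m = (m₀,…,m_L) ∈ R^{L+1} satisfies the homotopy axiom, then the ideal of R generated by {m₀,…,m_L} equals R, i.e. there exist r₀,…,r_L ∈ R with Σ_{k=0}^L r_k·m_k = 1. -/
open scoped BigOperators

noncomputable section

/-- If the generalized cubical homology theory of weight `m` satisfies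
the homotopy axiom (homotopic maps induce the same map on homology, expressed here on
cycles: the difference of the induced chains of a cycle is a boundary), then the
weight generates the unit ideal: there are `r₀,…,r_L` with `Σ r_k·m_k = 1`. -/
theorem span_of_homotopy_axiom (R : Type) [CommRing R] (L : ℕ) (m : Fin (L + 1) → R)
    (haxiom : ∀ (X Y : Type) [TopologicalSpace X] [TopologicalSpace Y] (f g : C(X, Y)),
      f.Homotopic g → ∀ (n : ℕ) (u : Kmod R X n), u ∈ cyclesMod R m X n →
        chainMap R f n u - chainMap R g n u ∈ LinearMap.range (bdry R m Y n)) :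
    ∃ r : Fin (L + 1) → R, ∑ k, r k * m k = 1 := by
  classical
  -- test functional on 0-chains of the interval
  set χ : C(Cube 0, unitInterval) → R :=
    fun T => if T (fun i => i.elim0) = 1 then 1 else 0 with hχ
  set φ : Kmod R unitInterval 0 →ₗ[R] R := Finsupp.lift R R C(Cube 0, unitInterval) χ with hφ
  have φsingle : ∀ (T : C(Cube 0, unitInterval)) (r : R), φ (Finsupp.single T r) = r * χ T := by
    intro T r
    simp [hφ, Finsupp.lift_apply, Finsupp.sum_single_index]
  set I := Ideal.span (Set.range m) with hI
  -- the functional sends boundaries into the ideal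
  have hbd : ∀ w : Kmod R unitInterval 1, φ (bdry R m unitInterval 0 w) ∈ I := by
    intro w
    induction w using Finsupp.induction_linear with
    | zero => simp
    | add a b ha hb =>
        rw [map_add, map_add]; exact add_mem ha hb
    | single T r =>
        have : bdry R m unitInterval 0 (Finsupp.single T r)
            = r • ∑ j : Fin 1, ∑ i : Fin (L + 1),
              ((-1 : R) ^ (j : ℕ) * m i) •
                Finsupp.single (face T j (vertexVal L i)) (1 : R) := by
          simp [bdry, Finsupp.lift_apply, Finsupp.sum_single_index]
        rw [this, map_smul, map_sum]
        refine Ideal.mul_mem_left _ _ (Ideal.sum_mem _ fun j _ => ?_)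
        rw [map_sum]
        refine Ideal.sum_mem _ fun i _ => ?_
        rw [map_smul, φsingle]
        have hm : m i ∈ I := Ideal.subset_span ⟨i, rfl⟩
        exact Ideal.mul_mem_right _ _ (Ideal.mul_mem_left _ _ hm)
  -- the two constant maps
  set f : C(Unit, unitInterval) := ContinuousMap.const _ 0 with hf
  set g : C(Unit, unitInterval) := ContinuousMap.const _ 1 with hg
  have hfg : f.Homotopic g :=
    ⟨⟨⟨fun p => p.1, continuous_fst⟩, fun x => rfl, fun x => rfl⟩⟩
  set T0 : C(Cube 0, Unit) := ContinuousMap.const _ () with hT0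
  set u : Kmod R Unit 0 := Finsupp.single T0 (1 : R) with hu
  have hcyc : u ∈ cyclesMod R m Unit 0 := Submodule.mem_top
  obtain ⟨w, hw⟩ := haxiom Unit unitInterval f g hfg 0 u hcyc
  have h1 : φ (chainMap R f 0 u - chainMap R g 0 u) = -1 := by
    have hfu : chainMap R f 0 u = Finsupp.single (f.comp T0) 1 := by
      simp [chainMap, hu, Finsupp.lift_apply, Finsupp.sum_single_index]
    have hgu : chainMap R g 0 u = Finsupp.single (g.comp T0) 1 := by
      simp [chainMap, hu, Finsupp.lift_apply, Finsupp.sum_single_index]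
    have h01 : (0 : unitInterval) ≠ 1 := fun h =>
      (zero_ne_one (α := ℝ)) (congrArg Subtype.val h)
    rw [map_sub, hfu, hgu, φsingle, φsingle, hχ]
    simp [hf, hg, h01]
  have hmem : (-1 : R) ∈ I := by
    rw [← h1, ← hw]; exact hbd w
  have hone : (1 : R) ∈ I := by simpa using neg_mem hmem
  rw [hI] at hone
  rw [← Ideal.submodule_span_eq] at hone
  obtain ⟨c, hc⟩ := (Submodule.mem_span_range_iff_exists_fun R).mp hone
  exact ⟨c, by simpa [smul_eq_mul] using hc⟩
end
end
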